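/- Let $k_0 < 0$, $0 < l \le \pi$, let $D \subset (0,l)$ be a set of full Lebesgue measure, and let $w : D \to \mathbb{R}$ satisfy: (i) $w$ is strictly decreasing on $D$ (if $t_1, t_2 \in D$ with $t_1 < t_2$ then $w(t_1) > w(t_2)$); (ii) for every $t_0 \in D$, $\limsup_{D \ni t \to t_0^+} \frac{w(t)-w(t_0)}{t-t_0} \le -1 - w(t_0)^2$; (iii) $w(t) \le \sqrt{-k_0}\cosh(\sqrt{-k_0}\,t)/\sinh(\sqrt{-k_0}\,t)$ for all $t \in D$. Then $w(t) \le \cot t$ for every $t \in D$. -/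

import Mathlib

open Filter MeasureTheory Set Real Topology

private lemma le_add_all (a b : ℝ) (h : ∀ ε : ℝ, 0 < ε → a ≤ b + ε) : a ≤ b := by
  by_contra hc
  push_neg at hc
  have := h ((a - b) / 2) (by linarith)
  linarith

/-- Analytic core: slope of `τ ↦ arctan x0 - arctan (x0 - B τ)` at `0` is `B/(1+x0²) > 1-ε`. -/
private lemma arctan_slope (x0 ε : ℝ) (hε : 0 < ε) (hε1 : ε < 1) :
    ∃ δ > 0, ∀ τ : ℝ, 0 < τ → τ < δ →
      (1 - ε) * τ ≤ arctan x0 - arctan (x0 - (1 + x0 ^ 2 - ε / 2) * τ) := by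
  set B : ℝ := 1 + x0 ^ 2 - ε / 2 with hB
  have hx0 : (0:ℝ) < 1 + x0 ^ 2 := by positivity
  have hBpos : 0 < B := by rw [hB]; nlinarith [sq_nonneg x0]
  set f : ℝ → ℝ := fun τ => arctan x0 - arctan (x0 - B * τ) with hf
  have hg : HasDerivAt (fun τ : ℝ => x0 - B * τ) (-(B * 1)) 0 :=
    ((hasDerivAt_id (0:ℝ)).const_mul B).const_sub x0
  have h2 : HasDerivAt (fun τ : ℝ => arctan (x0 - B * τ))
      ((1 / (1 + (x0 - B * 0) ^ 2)) * (-(B * 1))) 0 :=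
    by have := (Real.hasDerivAt_arctan (x0 - B * 0)).comp (0:ℝ) hg; exact this
  have h3 : HasDerivAt f (-((1 / (1 + (x0 - B * 0) ^ 2)) * (-(B * 1)))) 0 := h2.const_sub _
  have hderiv : HasDerivAt f (B / (1 + x0 ^ 2)) 0 := by
    convert h3 using 1
    field_simp
    ring
  have hgt : 1 - ε < B / (1 + x0 ^ 2) := by
    rw [lt_div_iff₀ hx0, hB]
    nlinarith [sq_nonneg x0, mul_pos hε hx0]
  have htend := hasDerivAt_iff_tendsto_slope.mp hderiv
  have hev : ∀ᶠ τ in 𝓝[≠] (0:ℝ), 1 - ε < slope f 0 τ :=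
    htend (Ioi_mem_nhds hgt)
  have hev2 : ∀ᶠ τ in 𝓝[>] (0:ℝ), 1 - ε < slope f 0 τ :=
    nhdsWithin_mono 0 (fun x hx => ne_of_gt hx) hev
  rw [eventually_nhdsWithin_iff] at hev2
  rcases Metric.eventually_nhds_iff.mp hev2 with ⟨δ, hδpos, hδ⟩
  refine ⟨δ, hδpos, fun τ hτ0 hτδ => ?_⟩
  have hs : 1 - ε < slope f 0 τ := by
    apply hδ (by simpa [abs_of_pos hτ0, sub_zero] using hτδ) hτ0
  have hf0 : f 0 = 0 := by simp [hf]
  rw [slope_def_field, hf0] at hs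
  have : (1 - ε) * τ ≤ ((f τ - 0) / (τ - 0)) * τ := by
    apply mul_le_mul_of_nonneg_right _ hτ0.le
    simpa using hs.le
  calc (1 - ε) * τ ≤ ((f τ - 0) / (τ - 0)) * τ := this
    _ = f τ := by rw [sub_zero, sub_zero, div_mul_cancel₀ _ hτ0.ne']
    _ = arctan x0 - arctan (x0 - B * τ) := rfl

/-- The propagation lemma: monotone on `D` + right derivative ≥ 1 along `D` + `D` dense. -/
private lemma key_prop (l : ℝ) (D : Set ℝ) (h : ℝ → ℝ)
    (hD : D ⊆ Set.Ioo 0 l)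
    (hfull : volume (Set.Ioo 0 l \ D) = 0)
    (hdense : ∀ a b : ℝ, 0 ≤ a → b ≤ l → a < b → (D ∩ Set.Ioo a b).Nonempty)
    (hmono : ∀ t1 ∈ D, ∀ t2 ∈ D, t1 < t2 → h t1 ≤ h t2)
    (hctrl : ∀ t0 ∈ D, ∀ ε : ℝ, 0 < ε → ε < 1 → ∃ δ > 0, ∀ s ∈ D,
      t0 < s → s < t0 + δ → h t0 + (1 - ε) * (s - t0) ≤ h s)
    (t1 : ℝ) (ht1 : t1 ∈ D) (t2 : ℝ) (ht2 : t2 ∈ D) (h12 : t1 < t2) :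
    t2 - t1 ≤ h t2 - h t1 := by
  have ht1I := hD ht1
  have ht2I := hD ht2
  -- main estimate for each ε ∈ (0,1)
  have main : ∀ ε : ℝ, 0 < ε → ε < 1 → (1 - ε) * (t2 - t1 - ε) ≤ h t2 - h t1 := by
    intro ε hε hε1
    -- get an open superset of the null complement
    have hnull : volume (Set.Ioo t1 t2 \ D) < ENNReal.ofReal ε := by
      have hsub : Set.Ioo t1 t2 \ D ⊆ Set.Ioo 0 l \ D := fun x hx =>
        ⟨⟨ht1I.1.trans hx.1.1, hx.1.2.trans ht2I.2⟩, hx.2⟩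
      rw [measure_mono_null hsub hfull]
      exact ENNReal.ofReal_pos.mpr hε
    obtain ⟨U, hUsub, hUopen, hUvol⟩ :=
      Set.exists_isOpen_lt_of_lt (Set.Ioo t1 t2 \ D) (ENNReal.ofReal ε) hnull
    set m : ℝ → ℝ := fun t => (volume (Set.Ioc t1 t \ U)).toReal with hm
    have hfin : ∀ t : ℝ, volume (Set.Ioc t1 t \ U) ≠ ⊤ := by
      intro t
      have : volume (Set.Ioc t1 t \ U) ≤ volume (Set.Ioc t1 t) :=
        measure_mono Set.diff_subset
      rw [Real.volume_Ioc] at this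
      exact (this.trans_lt ENNReal.ofReal_lt_top).ne
    have hm1 : m t1 = 0 := by simp [hm]
    have hmono' : ∀ t t' : ℝ, t ≤ t' → m t ≤ m t' := by
      intro t t' htt
      exact ENNReal.toReal_mono (hfin t')
        (measure_mono (Set.diff_subset_diff_left (Set.Ioc_subset_Ioc_right htt)))
    have hlip : ∀ t t' : ℝ, t1 ≤ t → t ≤ t' → m t' ≤ m t + (t' - t) := by
      intro t t' h1t htt
      have hsub : Set.Ioc t1 t' \ U ⊆ (Set.Ioc t1 t \ U) ∪ Set.Ioc t t' := by
        intro x hx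
        rcases le_or_gt x t with hc | hc
        · exact Or.inl ⟨⟨hx.1.1, hc⟩, hx.2⟩
        · exact Or.inr ⟨hc, hx.1.2⟩
      have : volume (Set.Ioc t1 t' \ U) ≤ volume (Set.Ioc t1 t \ U) + volume (Set.Ioc t t') :=
        (measure_mono hsub).trans (measure_union_le _ _)
      have h2 : volume (Set.Ioc t1 t' \ U) ≤ volume (Set.Ioc t1 t \ U) + ENNReal.ofReal (t' - t) := by
        rwa [Real.volume_Ioc] at this
      have := ENNReal.toReal_mono (by
        exact ENNReal.add_ne_top.mpr ⟨hfin t, ENNReal.ofReal_ne_top⟩) h2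
      rw [ENNReal.toReal_add (hfin t) ENNReal.ofReal_ne_top,
        ENNReal.toReal_ofReal (by linarith)] at this
      exact this
    have hconst : ∀ c t : ℝ, c ≤ t → Set.Ioc c t ⊆ U → m t = m c := by
      intro c t hct hcu
      have : Set.Ioc t1 t \ U = Set.Ioc t1 c \ U := by
        apply Set.Subset.antisymm
        · intro x hx
          rcases le_or_gt x c with hc | hc
          · exact ⟨⟨hx.1.1, hc⟩, hx.2⟩
          · exact absurd (hcu ⟨hc, hx.1.2⟩) hx.2
        · exact Set.diff_subset_diff_left (Set.Ioc_subset_Ioc_right hct)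
      simp [hm, this]
    have hmt2 : t2 - t1 - ε ≤ m t2 := by
      have hsub : Set.Ioc t1 t2 ⊆ (Set.Ioc t1 t2 \ U) ∪ U := by
        intro x hx
        by_cases hxu : x ∈ U
        · exact Or.inr hxu
        · exact Or.inl ⟨hx, hxu⟩
      have h1 : volume (Set.Ioc t1 t2) ≤ volume (Set.Ioc t1 t2 \ U) + volume U :=
        (measure_mono hsub).trans (measure_union_le _ _)
      rw [Real.volume_Ioc] at h1
      have h2 : ENNReal.ofReal (t2 - t1) ≤ volume (Set.Ioc t1 t2 \ U) + ENNReal.ofReal ε :=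
        h1.trans (add_le_add le_rfl hUvol.le)
      have h3 := ENNReal.toReal_mono
        (ENNReal.add_ne_top.mpr ⟨hfin t2, ENNReal.ofReal_ne_top⟩) h2
      rw [ENNReal.toReal_add (hfin t2) ENNReal.ofReal_ne_top,
        ENNReal.toReal_ofReal (by linarith), ENNReal.toReal_ofReal hε.le] at h3
      linarith [h3]
    -- the set S and its supremum
    set S : Set ℝ := {t | t ∈ Set.Icc t1 t2 ∧
      ∀ s ∈ D, t ≤ s → s ≤ t2 → h t1 + (1 - ε) * m t ≤ h s} with hS
    have ht1S : t1 ∈ S := by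
      refine ⟨⟨le_refl _, h12.le⟩, fun s hs hts _ => ?_⟩
      rw [hm1]
      rcases eq_or_lt_of_le hts with rfl | hlt
      · simp
      · have := hmono t1 ht1 s hs hlt
        linarith
    have hbdd : BddAbove S := ⟨t2, fun t ht => ht.1.2⟩
    have hSne : S.Nonempty := ⟨t1, ht1S⟩
    set c : ℝ := sSup S with hc
    have hc1 : t1 ≤ c := le_csSup hbdd ht1S
    have hc2 : c ≤ t2 := csSup_le hSne (fun t ht => ht.1.2)
    have hcS : c ∈ S := by
      refine ⟨⟨hc1, hc2⟩, fun s hs hcs hst2 => ?_⟩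
      apply le_add_all
      intro η hη
      obtain ⟨t, htS, htc⟩ := exists_lt_of_lt_csSup hSne (by linarith : c - η < c)
      have htc2 : t ≤ c := le_csSup hbdd htS
      have hmc : m c ≤ m t + η := by
        have := hlip t c htS.1.1 htc2
        linarith
      have := htS.2 s hs (le_trans htc2 hcs) hst2
      nlinarith [hmono' t c htc2]
    have hceq : c = t2 := by
      by_contra hne
      have hclt : c < t2 := lt_of_le_of_ne hc2 hne
      by_cases hcD : c ∈ D
      · -- use the differential control at c
        obtain ⟨δ, hδpos, hδ⟩ := hctrl c hcD ε hε hε1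
        set t : ℝ := min (c + δ) t2 with htdef
        have htgt : c < t := lt_min (by linarith) hclt
        have htle : t ≤ t2 := min_le_right _ _
        have htS : t ∈ S := by
          refine ⟨⟨by linarith, htle⟩, fun s hs hts hst2 => ?_⟩
          apply le_add_all
          intro η hη
          -- choose s' ∈ D ∩ (max c (t - η), t)
          have hmaxlt : max c (t - η) < t := max_lt htgt (by linarith)
          have h0max : 0 ≤ max c (t - η) := le_trans (le_trans ht1I.1.le hc1) (le_max_left _ _)
          have htl : t ≤ l := le_trans htle ht2I.2.le
          obtain ⟨s', hs'D, hs'mem⟩ := hdense (max c (t - η)) t h0max htl hmaxlt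
          have hs'c : c < s' := lt_of_le_of_lt (le_max_left _ _) hs'mem.1
          have hs'η : t - η < s' := lt_of_le_of_lt (le_max_right _ _) hs'mem.1
          have hs't : s' < t := hs'mem.2
          have hs's : s' < s := lt_of_lt_of_le hs't hts
          have e1 : h s' ≤ h s := hmono s' hs'D s hs hs's
          have e2 : h c + (1 - ε) * (s' - c) ≤ h s' := hδ s' hs'D hs'c
            (by have := min_le_left (c + δ) t2; simp only [← htdef] at this; linarith)
          have e3 : h t1 + (1 - ε) * m c ≤ h c := hcS.2 c hcD (le_refl _) hclt.le
          have e4 : m t ≤ m c + (t - c) := hlip c t hc1 htgt.le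
          nlinarith
        have := le_csSup hbdd htS
        linarith
      · -- c is in the open set U
        have hcU : c ∈ U := hUsub ⟨⟨lt_of_le_of_ne hc1 (fun hh => hcD (hh ▸ ht1)), hclt⟩, hcD⟩
        obtain ⟨δ, hδpos, hδball⟩ := Metric.isOpen_iff.mp hUopen c hcU
        set t : ℝ := min (c + δ / 2) t2 with htdef
        have htgt : c < t := lt_min (by linarith) hclt
        have htle : t ≤ t2 := min_le_right _ _
        have hIcc : Set.Ioc c t ⊆ U := by
          intro x hx
          apply hδball
          have hxle : x ≤ c + δ / 2 := hx.2.trans (min_le_left _ _)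
          simp only [Metric.mem_ball, Real.dist_eq, abs_sub_lt_iff]
          constructor <;> [linarith [hx.1]; linarith [hx.1]]
        have hmeq : m t = m c := hconst c t htgt.le hIcc
        have htS : t ∈ S := by
          refine ⟨⟨by linarith, htle⟩, fun s hs hts hst2 => ?_⟩
          rw [hmeq]
          exact hcS.2 s hs (htgt.le.trans hts) hst2
        have := le_csSup hbdd htS
        linarith
    have := hcS.2 t2 ht2 (hceq.le) (le_refl _)
    rw [hceq] at this
    nlinarith
  -- conclude by letting ε → 0
  apply le_add_all
  intro η hη
  have hden : (0:ℝ) < t2 - t1 + 1 := by linarith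
  set ε : ℝ := min (η / (t2 - t1 + 1)) (1 / 2) with hε
  have hεpos : 0 < ε := lt_min (div_pos hη hden) (by norm_num)
  have hε1 : ε < 1 := lt_of_le_of_lt (min_le_right _ _) (by norm_num)
  have hεle : ε * (t2 - t1 + 1) ≤ η := by
    have : ε ≤ η / (t2 - t1 + 1) := min_le_left _ _
    calc ε * (t2 - t1 + 1) ≤ η / (t2 - t1 + 1) * (t2 - t1 + 1) :=
          mul_le_mul_of_nonneg_right this hden.le
      _ = η := div_mul_cancel₀ η hden.ne'
  have := main ε hεpos hε1
  nlinarith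

theorem stmt0 (k0 l : ℝ) (hk0 : k0 < 0) (hl1 : 0 < l) (hl2 : l ≤ Real.pi)
    (D : Set ℝ) (hD : D ⊆ Set.Ioo 0 l)
    (hfull : volume (Set.Ioo 0 l \ D) = 0)
    (w : ℝ → ℝ)
    (hdec : ∀ t1 ∈ D, ∀ t2 ∈ D, t1 < t2 → w t2 < w t1)
    (hlimsup : ∀ t0 ∈ D,
      Filter.limsup (fun t => (w t - w t0) / (t - t0)) ((𝓝[>] t0) ⊓ 𝓟 D)
        ≤ -1 - (w t0) ^ 2)
    (hbar : ∀ t ∈ D,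
      w t ≤ Real.sqrt (-k0) * Real.cosh (Real.sqrt (-k0) * t) / Real.sinh (Real.sqrt (-k0) * t)) :
    ∀ t ∈ D, w t ≤ Real.cot t := by
  set h : ℝ → ℝ := fun t => π / 2 - arctan (w t) with hh
  have hdense : ∀ a b : ℝ, 0 ≤ a → b ≤ l → a < b → (D ∩ Set.Ioo a b).Nonempty := by
    intro a b ha hb hab
    by_contra hemp
    rw [Set.not_nonempty_iff_eq_empty] at hemp
    have hsub : Set.Ioo a b ⊆ Set.Ioo 0 l \ D := by
      intro x hx
      refine ⟨⟨lt_of_le_of_lt ha hx.1, lt_of_lt_of_le hx.2 hb⟩, fun hxD => ?_⟩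
      have : x ∈ D ∩ Set.Ioo a b := ⟨hxD, hx⟩
      rw [hemp] at this
      exact this
    have h0 := measure_mono_null hsub hfull
    rw [Real.volume_Ioo, ENNReal.ofReal_eq_zero] at h0
    linarith
  have hmono : ∀ t1 ∈ D, ∀ t2 ∈ D, t1 < t2 → h t1 ≤ h t2 := by
    intro t1 ht1 t2 ht2 h12
    have := arctan_strictMono (hdec t1 ht1 t2 ht2 h12)
    simp only [hh]
    linarith
  have hctrl : ∀ t0 ∈ D, ∀ ε : ℝ, 0 < ε → ε < 1 → ∃ δ > 0, ∀ s ∈ D,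
      t0 < s → s < t0 + δ → h t0 + (1 - ε) * (s - t0) ≤ h s := by
    intro t0 ht0 ε hε hε1
    set q : ℝ → ℝ := fun s => (w s - w t0) / (s - t0) with hq
    set cc : ℝ := -1 - (w t0) ^ 2 + ε / 2 with hcc
    have hev : ∀ᶠ s in (𝓝[>] t0) ⊓ 𝓟 D, q s ≤ cc := by
      have hls := hlimsup t0 ht0
      rw [Filter.limsup_eq] at hls
      set T : Set ℝ := {a | ∀ᶠ s in (𝓝[>] t0) ⊓ 𝓟 D, q s ≤ a} with hT
      have hTne : T.Nonempty := by
        by_contra hemp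
        rw [Set.not_nonempty_iff_eq_empty] at hemp
        rw [hemp, Real.sInf_empty] at hls
        nlinarith [sq_nonneg (w t0)]
      obtain ⟨a, haT, hac⟩ : ∃ a ∈ T, a ≤ cc := by
        by_contra hno
        push_neg at hno
        have := le_csInf hTne (fun a ha => (hno a ha).le)
        have h2 : -1 - (w t0) ^ 2 < cc := by rw [hcc]; linarith
        linarith
      simp only [hT, Set.mem_setOf_eq] at haT
      exact haT.mono (fun s hs => le_trans hs hac)
    rw [Filter.eventually_inf_principal] at hev
    rw [eventually_nhdsWithin_iff] at hev
    obtain ⟨δ₁, hδ₁pos, hδ₁⟩ := Metric.eventually_nhds_iff.mp hev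
    obtain ⟨δ₂, hδ₂pos, hδ₂⟩ := arctan_slope (w t0) ε hε hε1
    refine ⟨min δ₁ δ₂, lt_min hδ₁pos hδ₂pos, fun s hsD hlt hup => ?_⟩
    have hpos : 0 < s - t0 := by linarith
    have hq1 : q s ≤ cc := by
      refine hδ₁ ?_ hlt hsD
      rw [Real.dist_eq, abs_of_pos hpos]
      have := min_le_left δ₁ δ₂
      linarith
    have hw : w s ≤ w t0 - (1 + (w t0) ^ 2 - ε / 2) * (s - t0) := by
      have := (div_le_iff₀ hpos).mp hq1
      rw [hcc] at this
      nlinarith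
    have harc : arctan (w s) ≤ arctan (w t0 - (1 + (w t0) ^ 2 - ε / 2) * (s - t0)) :=
      arctan_strictMono.monotone hw
    have hsl := hδ₂ (s - t0) hpos (by have := min_le_right δ₁ δ₂; linarith)
    simp only [hh]
    linarith
  intro t ht
  have htI := hD ht
  have hgoal : t ≤ h t := by
    apply le_add_all
    intro η hη
    have hminpos : 0 < min η t := lt_min hη htI.1
    obtain ⟨t1, ht1D, ht1mem⟩ := hdense 0 (min η t) (le_refl 0)
      (le_trans (min_le_right η t) htI.2.le) hminpos
    have ht1t : t1 < t := lt_of_lt_of_le ht1mem.2 (min_le_right η t)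
    have hkey := key_prop l D h hD hfull hdense hmono hctrl t1 ht1D t ht ht1t
    have hpos : 0 < h t1 := by
      simp only [hh]
      linarith [arctan_lt_pi_div_two (w t1)]
    have : t1 < η := lt_of_lt_of_le ht1mem.2 (min_le_left η t)
    linarith
  -- convert to the cotangent bound
  have htpi : t < π := lt_of_lt_of_le htI.2 hl2
  have harc : arctan (w t) ≤ π / 2 - t := by
    simp only [hh] at hgoal
    linarith
  have hmem1 : arctan (w t) ∈ Set.Ioo (-(π / 2)) (π / 2) := arctan_mem_Ioo (w t)
  have hmem2 : π / 2 - t ∈ Set.Ioo (-(π / 2)) (π / 2) := by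
    constructor <;> simp <;> linarith [htI.1]
  have := strictMonoOn_tan.monotoneOn hmem1 hmem2 harc
  rw [Real.tan_arctan, Real.tan_pi_div_two_sub] at this
  rw [Real.cot_eq_cos_div_sin]
  rw [Real.tan_eq_sin_div_cos, inv_div] at this
  exact this
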